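/- Let S be a numerical semigroup with critical element k, and set S_θ = {n ∈ ℕ : n ≥ k}. Then every automorphism f of P(S) maps P(S_θ) into itself, and the restriction of f to P(S_θ) is an automorphism of P(S_θ). -/

import Mathlib

open Pointwise

/-- The power semigroup `P(S)`: finite nonempty subsets of `S`. -/
def PS (S : Set ℕ) : Set (Finset ℕ) := {X | X.Nonempty ∧ (X : Set ℕ) ⊆ S}

/-- `f` is an automorphism of the power semigroup `P(S)`:
an additive bijection of `P(S)` (setwise addition). -/
def IsPowerAut (S : Set ℕ) (f : Finset ℕ → Finset ℕ) : Prop :=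
  (∀ X ∈ PS S, f X ∈ PS S) ∧
  (∀ X ∈ PS S, ∀ Y ∈ PS S, f X = f Y → X = Y) ∧
  (∀ Y ∈ PS S, ∃ X ∈ PS S, f X = Y) ∧
  (∀ X ∈ PS S, ∀ Y ∈ PS S, f (X + Y) = f X + f Y)

/-- `S` is a numerical semigroup: a subsemigroup of `(ℕ, +)` with finite complement. -/
def IsNumSgp (S : Set ℕ) : Prop :=
  (∀ a ∈ S, ∀ b ∈ S, a + b ∈ S) ∧ (Sᶜ).Finite

/-- `k` is the critical element of `S`: the least `k` with `[k, ∞) ⊆ S`. -/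
def IsCritical (S : Set ℕ) (k : ℕ) : Prop :=
  (∀ n, k ≤ n → n ∈ S) ∧ ∀ j, (∀ n, j ≤ n → n ∈ S) → k ≤ j

namespace Stmt7Aux

/-- total versions of min/max -/
noncomputable def mn (X : Finset ℕ) : ℕ := WithTop.untopD 0 X.min
noncomputable def mx (X : Finset ℕ) : ℕ := WithBot.unbotD 0 X.max

lemma mn_eq {X : Finset ℕ} (h : X.Nonempty) : mn X = X.min' h := by
  rw [mn, ← Finset.coe_min' h]; rfl
lemma mx_eq {X : Finset ℕ} (h : X.Nonempty) : mx X = X.max' h := by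
  rw [mx, ← Finset.coe_max' h]; rfl

lemma mn_mem {X : Finset ℕ} (h : X.Nonempty) : mn X ∈ X := by
  rw [mn_eq h]; exact X.min'_mem h
lemma mx_mem {X : Finset ℕ} (h : X.Nonempty) : mx X ∈ X := by
  rw [mx_eq h]; exact X.max'_mem h
lemma mn_le {X : Finset ℕ} {x : ℕ} (hx : x ∈ X) : mn X ≤ x := by
  rw [mn_eq ⟨x, hx⟩]; exact Finset.min'_le _ _ hx
lemma le_mx {X : Finset ℕ} {x : ℕ} (hx : x ∈ X) : x ≤ mx X := by
  rw [mx_eq ⟨x, hx⟩]; exact Finset.le_max' _ _ hx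
lemma mn_le_mx {X : Finset ℕ} (h : X.Nonempty) : mn X ≤ mx X :=
  le_mx (mn_mem h)

lemma mn_add {X Y : Finset ℕ} (hX : X.Nonempty) (hY : Y.Nonempty) :
    mn (X + Y) = mn X + mn Y := by
  apply le_antisymm
  · exact mn_le (Finset.add_mem_add (mn_mem hX) (mn_mem hY))
  · rw [mn_eq (hX.add hY)]
    apply Finset.le_min'
    intro z hz
    obtain ⟨x, hx, y, hy, rfl⟩ := Finset.mem_add.mp hz
    exact Nat.add_le_add (mn_le hx) (mn_le hy)

lemma mx_add {X Y : Finset ℕ} (hX : X.Nonempty) (hY : Y.Nonempty) :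
    mx (X + Y) = mx X + mx Y := by
  apply le_antisymm
  · rw [mx_eq (hX.add hY)]
    apply Finset.max'_le
    intro z hz
    obtain ⟨x, hx, y, hy, rfl⟩ := Finset.mem_add.mp hz
    exact Nat.add_le_add (le_mx hx) (le_mx hy)
  · exact le_mx (Finset.add_mem_add (mx_mem hX) (mx_mem hY))

lemma mn_singleton (a : ℕ) : mn {a} = a := by rw [mn, Finset.min_singleton]; rfl
lemma mx_singleton (a : ℕ) : mx {a} = a := by rw [mx, Finset.max_singleton]; rfl

lemma mn_pair {a b : ℕ} (hab : a ≤ b) : mn {a, b} = a := by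
  have h : ({a, b} : Finset ℕ).Nonempty := ⟨a, by simp⟩
  have h1 := mn_le (X := {a, b}) (x := a) (by simp)
  have h2 := mn_mem h
  simp only [Finset.mem_insert, Finset.mem_singleton] at h2
  rcases h2 with h2 | h2 <;> omega

lemma mx_pair {a b : ℕ} (hab : a ≤ b) : mx {a, b} = b := by
  have h : ({a, b} : Finset ℕ).Nonempty := ⟨a, by simp⟩
  have h1 := le_mx (X := {a, b}) (x := b) (by simp)
  have h2 := mx_mem h
  simp only [Finset.mem_insert, Finset.mem_singleton] at h2
  rcases h2 with h2 | h2 <;> omega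

lemma eq_singleton_of_mn_eq_mx {X : Finset ℕ} (h : X.Nonempty) (he : mn X = mx X) :
    X = {mn X} := by
  apply Finset.eq_singleton_iff_unique_mem.mpr
  refine ⟨mn_mem h, fun x hx => ?_⟩
  have := mn_le hx
  have := le_mx hx
  omega

/-- translation by singleton is injective -/
lemma add_singleton_inj {Y Z : Finset ℕ} {t : ℕ} (h : Y + {t} = Z + {t}) : Y = Z := by
  ext x
  have key : ∀ (A B : Finset ℕ), A + {t} = B + {t} → x ∈ A → x ∈ B := by
    intro A B hAB hx
    have : x + t ∈ B + {t} := by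
      rw [← hAB]; exact Finset.add_mem_add hx (Finset.mem_singleton_self t)
    obtain ⟨y, hy, c, hc, hxy⟩ := Finset.mem_add.mp this
    rw [Finset.mem_singleton] at hc
    have : y = x := by omega
    rwa [← this]
  exact ⟨key Y Z h, key Z Y h.symm⟩

/-- sumset with a long interval is a full interval -/
lemma add_Icc {X : Finset ℕ} (hX : X.Nonempty) {a b : ℕ}
    (hab : mx X + a ≤ mn X + b) :
    X + Finset.Icc a b = Finset.Icc (mn X + a) (mx X + b) := by
  ext n
  simp only [Finset.mem_Icc]
  constructor
  · intro hn
    obtain ⟨x, hx, y, hy, rfl⟩ := Finset.mem_add.mp hn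
    rw [Finset.mem_Icc] at hy
    have := mn_le hx; have := le_mx hx
    omega
  · intro hn
    classical
    set T := X.filter (fun x => x + a ≤ n) with hT
    have hmT : mn X ∈ T := by
      rw [hT, Finset.mem_filter]
      exact ⟨mn_mem hX, by omega⟩
    have hTne : T.Nonempty := ⟨_, hmT⟩
    set x := T.max' hTne with hxdef
    have hxT : x ∈ T := T.max'_mem hTne
    rw [hT, Finset.mem_filter] at hxT
    obtain ⟨hxX, hxa⟩ := hxT
    have hxmn : mn X ≤ x := mn_le hxX
    have hxmx : x ≤ mx X := le_mx hxX
    have hyb : n - x ≤ b := by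
      by_cases hMT : mx X ∈ T
      · have hxM : mx X ≤ x := Finset.le_max' _ _ hMT
        have : x = mx X := le_antisymm hxmx hxM
        omega
      · have : ¬ (mx X + a ≤ n) := by
          intro hcon
          exact hMT (by rw [hT, Finset.mem_filter]; exact ⟨mx_mem hX, hcon⟩)
        omega
    refine Finset.mem_add.mpr ⟨x, hxX, n - x, ?_, ?_⟩
    · rw [Finset.mem_Icc]; omega
    · omega


section

variable {S : Set ℕ} {k : ℕ} {f : Finset ℕ → Finset ℕ}

lemma PS_add (hS : IsNumSgp S) {X Y : Finset ℕ} (hX : X ∈ PS S) (hY : Y ∈ PS S) :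
    X + Y ∈ PS S := by
  refine ⟨hX.1.add hY.1, fun z hz => ?_⟩
  obtain ⟨x, hx, y, hy, rfl⟩ := Finset.mem_add.mp (by exact_mod_cast hz)
  exact hS.1 x (hX.2 hx) y (hY.2 hy)

lemma singleton_mem_PS {s : ℕ} (hs : s ∈ S) : ({s} : Finset ℕ) ∈ PS S :=
  ⟨⟨s, Finset.mem_singleton_self s⟩, by simpa using hs⟩

lemma Icc_mem_PS (hk : IsCritical S k) {a b : ℕ} (ha : k ≤ a) (hab : a ≤ b) :
    (Finset.Icc a b) ∈ PS S := by
  refine ⟨⟨a, Finset.mem_Icc.mpr ⟨le_refl a, hab⟩⟩, fun z hz => ?_⟩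
  have : z ∈ Finset.Icc a b := by exact_mod_cast hz
  rw [Finset.mem_Icc] at this
  exact hk.1 z (le_trans ha this.1)

/-- any non-singleton element of `PS S` fails cancellation -/
lemma not_cancel (hk : IsCritical S k) {X : Finset ℕ} (hX : X ∈ PS S)
    (h2 : ¬ ∃ s, X = {s}) :
    ∃ Y ∈ PS S, ∃ Z ∈ PS S, Y ≠ Z ∧ X + Y = X + Z := by
  classical
  have hne := hX.1
  set m := mn X with hm
  set M := mx X with hM
  have hmM : m < M := by
    rcases lt_or_eq_of_le (mn_le_mx hne) with h | h
    · exact h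
    · exact absurd ⟨mn X, eq_singleton_of_mn_eq_mx hne h⟩ h2
  set D := M - m with hD
  have hD1 : 1 ≤ D := by omega
  set Y := Finset.Icc k (k + 2 * D) with hY
  set Z := Y.erase (k + D) with hZ
  have hYPS : Y ∈ PS S := Icc_mem_PS hk (le_refl k) (by omega)
  have hkZ : k ∈ Z := by
    rw [hZ, Finset.mem_erase]
    exact ⟨by omega, Finset.mem_Icc.mpr ⟨le_refl k, by omega⟩⟩
  have hZPS : Z ∈ PS S := by
    refine ⟨⟨k, hkZ⟩, fun z hz => ?_⟩
    have : z ∈ Z := by exact_mod_cast hz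
    rw [hZ] at this
    exact hYPS.2 (Finset.erase_subset _ _ this)
  refine ⟨Y, hYPS, Z, hZPS, ?_, ?_⟩
  · intro hcon
    have : k + D ∈ Y := Finset.mem_Icc.mpr ⟨by omega, by omega⟩
    rw [hcon, hZ] at this
    exact absurd rfl (Finset.mem_erase.mp this).1
  · apply le_antisymm
    swap
    · -- X + Z ⊆ X + Y
      intro z hz
      obtain ⟨x, hx, y, hy, rfl⟩ := Finset.mem_add.mp hz
      exact Finset.add_mem_add hx (Finset.erase_subset _ _ hy)
    · intro z hz
      obtain ⟨x, hx, y, hy, rfl⟩ := Finset.mem_add.mp hz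
      by_cases hyD : y = k + D
      · subst hyD
        by_cases hxm : x = m
        · subst hxm
          have hMX : M ∈ X := mx_mem hne
          have : m + (k + D) = M + k := by omega
          rw [this]
          exact Finset.add_mem_add hMX hkZ
        · have hmx : m < x := lt_of_le_of_ne (mn_le hx) (Ne.symm hxm)
          have hxM : x ≤ M := le_mx hx
          have hmem : k + D + (x - m) ∈ Z := by
            rw [hZ, Finset.mem_erase]
            constructor
            · omega
            · rw [hY, Finset.mem_Icc]; omega
          have hmX : m ∈ X := mn_mem hne
          have : x + (k + D) = m + (k + D + (x - m)) := by omega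
          rw [this]
          exact Finset.add_mem_add hmX hmem
      · have : y ∈ Z := by
          rw [hZ, Finset.mem_erase]; exact ⟨hyD, hy⟩
        exact Finset.add_mem_add hx this

/-- cancellative elements of `PS S` are singletons -/
lemma cancel_singleton (hk : IsCritical S k) {X : Finset ℕ} (hX : X ∈ PS S)
    (hc : ∀ Y ∈ PS S, ∀ Z ∈ PS S, X + Y = X + Z → Y = Z) :
    ∃ s ∈ S, X = {s} := by
  by_contra hcon
  have h2 : ¬ ∃ s, X = {s} := by
    rintro ⟨s, rfl⟩
    exact hcon ⟨s, by simpa using hX.2 (Finset.mem_singleton_self s), rfl⟩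
  obtain ⟨Y, hY, Z, hZ, hne, heq⟩ := not_cancel hk hX h2
  exact hne (hc Y hY Z hZ heq)


/-- image of a singleton is a singleton -/
lemma f_sing_sing (hS : IsNumSgp S) (hk : IsCritical S k) (hf : IsPowerAut S f)
    {x : ℕ} (hx : x ∈ S) : ∃ t ∈ S, f {x} = {t} := by
  obtain ⟨hmap, hinj, hsurj, hadd⟩ := hf
  have hxPS := singleton_mem_PS hx
  apply cancel_singleton hk (hmap _ hxPS)
  intro Y hY Z hZ heq
  obtain ⟨Y0, hY0, rfl⟩ := hsurj Y hY
  obtain ⟨Z0, hZ0, rfl⟩ := hsurj Z hZ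
  have : f ({x} + Y0) = f ({x} + Z0) := by
    rw [hadd _ hxPS _ hY0, hadd _ hxPS _ hZ0, heq]
  have h2 : {x} + Y0 = {x} + Z0 :=
    hinj _ (PS_add hS hxPS hY0) _ (PS_add hS hxPS hZ0) this
  have h3 : Y0 = Z0 := by
    apply add_singleton_inj (t := x)
    rwa [add_comm Y0, add_comm Z0]
  rw [h3]

/-- preimage of a singleton is a singleton -/
lemma f_sing_surj (hS : IsNumSgp S) (hk : IsCritical S k) (hf : IsPowerAut S f)
    {y : ℕ} (hy : y ∈ S) : ∃ s ∈ S, f {s} = {y} := by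
  obtain ⟨hmap, hinj, hsurj, hadd⟩ := hf
  obtain ⟨X, hX, hfX⟩ := hsurj {y} (singleton_mem_PS hy)
  have hc : ∀ Y ∈ PS S, ∀ Z ∈ PS S, X + Y = X + Z → Y = Z := by
    intro Y hY Z hZ heq
    have : f X + f Y = f X + f Z := by
      rw [← hadd _ hX _ hY, ← hadd _ hX _ hZ, heq]
    rw [hfX] at this
    have h2 : f Y = f Z := by
      apply add_singleton_inj (t := y)
      rwa [add_comm (f Y), add_comm (f Z)]
    exact hinj _ hY _ hZ h2
  obtain ⟨s, hs, rfl⟩ := cancel_singleton hk hX hc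
  exact ⟨s, hs, hfX⟩

/-- the induced map on `S` -/
noncomputable def g (f : Finset ℕ → Finset ℕ) (s : ℕ) : ℕ := (f {s}).sum id

lemma g_spec (hS : IsNumSgp S) (hk : IsCritical S k) (hf : IsPowerAut S f)
    {x : ℕ} (hx : x ∈ S) : f {x} = {g f x} ∧ g f x ∈ S := by
  obtain ⟨t, ht, hft⟩ := f_sing_sing hS hk hf hx
  have : g f x = t := by rw [g, hft, Finset.sum_singleton, id]
  rw [this, hft]
  exact ⟨rfl, ht⟩

lemma g_add (hS : IsNumSgp S) (hk : IsCritical S k) (hf : IsPowerAut S f)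
    {x y : ℕ} (hx : x ∈ S) (hy : y ∈ S) : g f (x + y) = g f x + g f y := by
  have hxy : x + y ∈ S := hS.1 x hx y hy
  have h1 := (g_spec hS hk hf hxy).1
  have h2 : f ({x} + {y}) = f {x} + f {y} :=
    hf.2.2.2 _ (singleton_mem_PS hx) _ (singleton_mem_PS hy)
  rw [Finset.singleton_add_singleton] at h2
  rw [h1, (g_spec hS hk hf hx).1, (g_spec hS hk hf hy).1,
    Finset.singleton_add_singleton] at h2
  exact Finset.singleton_injective h2

lemma g_inj (hS : IsNumSgp S) (hk : IsCritical S k) (hf : IsPowerAut S f)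
    {x y : ℕ} (hx : x ∈ S) (hy : y ∈ S) (hg : g f x = g f y) : x = y := by
  have h1 := (g_spec hS hk hf hx).1
  have h2 := (g_spec hS hk hf hy).1
  have : f {x} = f {y} := by rw [h1, h2, hg]
  have := hf.2.1 _ (singleton_mem_PS hx) _ (singleton_mem_PS hy) this
  exact Finset.singleton_injective this

lemma g_mul (hS : IsNumSgp S) (hk : IsCritical S k) (hf : IsPowerAut S f)
    {a : ℕ} (ha : a ∈ S) : ∀ n : ℕ, 1 ≤ n → n * a ∈ S ∧ g f (n * a) = n * g f a := by
  intro n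
  induction n with
  | zero => omega
  | succ n ih =>
    intro _
    by_cases hn : 1 ≤ n
    · obtain ⟨hmem, heq⟩ := ih hn
      have hmem2 : (n + 1) * a ∈ S := by
        have := hS.1 _ hmem _ ha
        rwa [show n * a + a = (n+1) * a by ring] at this
      refine ⟨hmem2, ?_⟩
      have : g f (n * a + a) = g f (n * a) + g f a := g_add hS hk hf hmem ha
      rw [show n * a + a = (n+1) * a by ring] at this
      rw [this, heq]; ring
    · have : n = 0 := by omega
      subst this
      constructor
      · simpa using ha
      · norm_num

/-- the induced map is the identity -/
lemma g_id (hS : IsNumSgp S) (hk : IsCritical S k) (hf : IsPowerAut S f) :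
    ∀ x ∈ S, f {x} = {x} := by
  classical
  -- cross relation
  have hcross : ∀ a ∈ S, ∀ b ∈ S, a ≠ 0 → b ≠ 0 → a * g f b = b * g f a := by
    intro a ha b hb ha0 hb0
    have h1 := (g_mul hS hk hf hb a (by omega)).2
    have h2 := (g_mul hS hk hf ha b (by omega)).2
    rw [mul_comm a b] at h1
    rw [← h1, ← h2]
  have hzero : (0 : ℕ) ∈ S → g f 0 = 0 := by
    intro h0
    have := g_add hS hk hf h0 h0
    rw [show (0:ℕ) + 0 = 0 from rfl] at this
    omega
  have hex : ∃ n, n ∈ S ∧ n ≠ 0 := ⟨k + 1, hk.1 _ (by omega), by omega⟩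
  set m := Nat.find hex with hmdef
  obtain ⟨hmS, hm0⟩ : m ∈ S ∧ m ≠ 0 := Nat.find_spec hex
  have hmin : ∀ n, n < m → ¬(n ∈ S ∧ n ≠ 0) := fun n hn => Nat.find_min hex hn
  -- key: g f m = m
  have hgm : g f m = m := by
    rcases lt_trichotomy (g f m) m with h | h | h
    · -- g f m < m
      exfalso
      by_cases hg0 : g f m = 0
      · -- then g is constantly 0 on nonzero elements: contradicts injectivity
        have hz : ∀ a ∈ S, a ≠ 0 → g f a = 0 := by
          intro a ha ha0
          have := hcross a ha m hmS ha0 hm0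
          rw [hg0] at this
          simp at this
          rcases this with h | h
          · omega
          · omega
        have h1 : g f (k + 1) = 0 := hz _ (hk.1 _ (by omega)) (by omega)
        have h2 : g f (k + 2) = 0 := hz _ (hk.1 _ (by omega)) (by omega)
        have := g_inj hS hk hf (hk.1 (k+1) (by omega)) (hk.1 (k+2) (by omega)) (by omega)
        omega
      · exact hmin _ h ⟨(g_spec hS hk hf hmS).2, hg0⟩
    · exact h
    · -- g f m > m : contradict via surjectivity
      exfalso
      obtain ⟨s, hsS, hfs⟩ := f_sing_surj hS hk hf hmS
      have hgs : g f s = m := by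
        have := (g_spec hS hk hf hsS).1
        rw [hfs] at this
        exact (Finset.singleton_injective this.symm)
      have hs0 : s ≠ 0 := by
        intro h0
        subst h0
        have := hzero hsS
        omega
      have := hcross s hsS m hmS hs0 hm0
      rw [hgs] at this
      -- s * g f m = m * m, g f m > m ⇒ s < m
      have hsm : s < m := by
        by_contra hge
        push_neg at hge
        nlinarith [this, h, Nat.pos_of_ne_zero hm0]
      exact hmin s hsm ⟨hsS, hs0⟩
  -- conclude
  intro x hx
  have hgx : g f x = x := by
    by_cases hx0 : x = 0
    · subst hx0; exact hzero hx
    · have := hcross x hx m hmS hx0 hm0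
      rw [hgm] at this
      have h' : m * x = m * g f x := by
        rw [mul_comm m x, this]
      exact (Nat.eq_of_mul_eq_mul_left (Nat.pos_of_ne_zero hm0) h').symm
  rw [(g_spec hS hk hf hx).1, hgx]


/-- the min-shift functional -/
noncomputable def lam (f : Finset ℕ → Finset ℕ) (X : Finset ℕ) : ℤ :=
  (mn (f X) : ℤ) - (mn X : ℤ)

lemma lam_add (hS : IsNumSgp S) (hf : IsPowerAut S f)
    {X Y : Finset ℕ} (hX : X ∈ PS S) (hY : Y ∈ PS S) :
    lam f (X + Y) = lam f X + lam f Y := by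
  have h1 : f (X + Y) = f X + f Y := hf.2.2.2 _ hX _ hY
  have h2 : mn (f (X + Y)) = mn (f X) + mn (f Y) := by
    rw [h1]; exact mn_add (hf.1 _ hX).1 (hf.1 _ hY).1
  have h3 : mn (X + Y) = mn X + mn Y := mn_add hX.1 hY.1
  simp only [lam, h2, h3]
  push_cast
  ring

lemma lam_class (hS : IsNumSgp S) (hk : IsCritical S k) (hf : IsPowerAut S f)
    {X Y : Finset ℕ} (hX : X ∈ PS S) (hY : Y ∈ PS S)
    (hmn : mn X = mn Y) (hmx : mx X = mx Y) : lam f X = lam f Y := by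
  set W := Finset.Icc k (k + (mx X - mn X)) with hW
  have hWPS : W ∈ PS S := Icc_mem_PS hk (le_refl k) (by omega)
  have hd : mn X ≤ mx X := mn_le_mx hX.1
  have h1 : X + W = Finset.Icc (mn X + k) (mx X + (k + (mx X - mn X))) :=
    add_Icc hX.1 (by omega)
  have h2 : Y + W = Finset.Icc (mn Y + k) (mx Y + (k + (mx X - mn X))) :=
    add_Icc hY.1 (by rw [← hmn, ← hmx]; omega)
  have hXW : X + W = Y + W := by rw [h1, h2, hmn, hmx]
  have e1 : lam f (X + W) = lam f X + lam f W := lam_add hS hf hX hWPS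
  have e2 : lam f (Y + W) = lam f Y + lam f W := lam_add hS hf hY hWPS
  rw [hXW] at e1
  rw [e2] at e1
  linarith

lemma lam_fix (hfix : ∀ x ∈ S, f {x} = {x}) {s : ℕ} (hs : s ∈ S) :
    lam f {s} = 0 := by
  simp [lam, hfix s hs]

/-- iterated sums of the basic pair -/
noncomputable def Q (k : ℕ) : ℕ → Finset ℕ
  | 0 => {k}
  | d + 1 => Q k d + {k, k + 1}

lemma pair_mem_PS (hk : IsCritical S k) {a b : ℕ} (ha : k ≤ a) (hb : k ≤ b) :
    ({a, b} : Finset ℕ) ∈ PS S := by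
  refine ⟨⟨a, by simp⟩, fun z hz => ?_⟩
  have : z ∈ ({a, b} : Finset ℕ) := by exact_mod_cast hz
  simp only [Finset.mem_insert, Finset.mem_singleton] at this
  rcases this with rfl | rfl
  · exact hk.1 _ ha
  · exact hk.1 _ hb

lemma Q_spec (hS : IsNumSgp S) (hk : IsCritical S k) :
    ∀ d, Q k d ∈ PS S ∧ mn (Q k d) = d * k + k ∧ mx (Q k d) = d * k + d + k := by
  intro d
  induction d with
  | zero =>
    refine ⟨singleton_mem_PS (hk.1 k (le_refl k)), ?_, ?_⟩ <;>
      simp [Q, mn_singleton, mx_singleton]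
  | succ d ih =>
    obtain ⟨hPS, hmn, hmx⟩ := ih
    have hpair : ({k, k+1} : Finset ℕ) ∈ PS S := pair_mem_PS hk (le_refl k) (by omega)
    refine ⟨PS_add hS hPS hpair, ?_, ?_⟩
    · rw [Q, mn_add hPS.1 hpair.1, hmn, mn_pair (by omega)]
      ring
    · rw [Q, mx_add hPS.1 hpair.1, hmx, mx_pair (by omega)]
      ring

lemma lam_Q (hS : IsNumSgp S) (hk : IsCritical S k) (hf : IsPowerAut S f)
    (hfix : ∀ x ∈ S, f {x} = {x}) :
    ∀ d, lam f (Q k d) = d * lam f {k, k + 1} := by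
  intro d
  induction d with
  | zero =>
    rw [Q, lam_fix hfix (hk.1 k (le_refl k))]
    simp
  | succ d ih =>
    have hpair : ({k, k+1} : Finset ℕ) ∈ PS S := pair_mem_PS hk (le_refl k) (by omega)
    rw [Q, lam_add hS hf (Q_spec hS hk d).1 hpair, ih]
    push_cast
    ring

/-- the master formula: `min (f X) = min X + c · (max X - min X)` -/
lemma min_formula (hS : IsNumSgp S) (hk : IsCritical S k) (hf : IsPowerAut S f)
    (hfix : ∀ x ∈ S, f {x} = {x}) :
    ∃ c : ℤ, 0 ≤ c ∧ ∀ X ∈ PS S,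
      (mn (f X) : ℤ) = (mn X : ℤ) + c * ((mx X : ℤ) - (mn X : ℤ)) := by
  set c := lam f {k, k + 1} with hc
  have main : ∀ X ∈ PS S, lam f X = ((mx X : ℤ) - (mn X : ℤ)) * c := by
    intro X hX
    set d := mx X - mn X with hd
    have hdle : mn X ≤ mx X := mn_le_mx hX.1
    have hmnS : mn X ∈ S := hX.2 (mn_mem hX.1)
    have hsing1 : ((d + 1) * k) ∈ S := hk.1 _ (by nlinarith)
    set A := X + {(d + 1) * k} with hA
    set B := Q k d + {mn X} with hB
    have hAPS : A ∈ PS S := PS_add hS hX (singleton_mem_PS hsing1)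
    have hQ := Q_spec hS hk (k := k) d
    have hBPS : B ∈ PS S := PS_add hS hQ.1 (singleton_mem_PS hmnS)
    have hmnA : mn A = mn X + (d + 1) * k := by
      rw [hA, mn_add hX.1 ⟨_, Finset.mem_singleton_self _⟩, mn_singleton]
    have hmxA : mx A = mx X + (d + 1) * k := by
      rw [hA, mx_add hX.1 ⟨_, Finset.mem_singleton_self _⟩, mx_singleton]
    have hmnB : mn B = d * k + k + mn X := by
      rw [hB, mn_add hQ.1.1 ⟨_, Finset.mem_singleton_self _⟩, mn_singleton, hQ.2.1]
    have hmxB : mx B = d * k + d + k + mn X := by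
      rw [hB, mx_add hQ.1.1 ⟨_, Finset.mem_singleton_self _⟩, mx_singleton, hQ.2.2]
    have hclass : lam f A = lam f B := by
      apply lam_class hS hk hf hAPS hBPS
      · rw [hmnA, hmnB]; ring
      · rw [hmxA, hmxB, add_one_mul]; omega
    have eA : lam f A = lam f X := by
      rw [hA, lam_add hS hf hX (singleton_mem_PS hsing1), lam_fix hfix hsing1]
      ring
    have eB : lam f B = d * c := by
      rw [hB, lam_add hS hf hQ.1 (singleton_mem_PS hmnS), lam_fix hfix hmnS,
        lam_Q hS hk hf hfix]
      ring
    have : lam f X = (d : ℤ) * c := by rw [← eA, hclass, eB]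
    rw [this]
    have : ((d : ℕ) : ℤ) = (mx X : ℤ) - (mn X : ℤ) := by
      rw [hd]; omega
    rw [this]
  have hcpos : 0 ≤ c := by
    have hXPS : ({k, k + (k+1)} : Finset ℕ) ∈ PS S := pair_mem_PS hk (le_refl k) (by omega)
    have h1 := main _ hXPS
    rw [lam, mn_pair (by omega), mx_pair (by omega)] at h1
    push_cast at h1
    have h2 : (0 : ℤ) ≤ (mn (f ({k, k + (k+1)} : Finset ℕ)) : ℤ) := by positivity
    by_contra hneg
    push_neg at hneg
    have hc1 : c ≤ -1 := by omega
    have h3 : ((k : ℤ) + 1) * c ≤ ((k : ℤ) + 1) * (-1) :=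
      mul_le_mul_of_nonneg_left hc1 (by positivity)
    linarith
  refine ⟨c, hcpos, fun X hX => ?_⟩
  have := main X hX
  rw [lam] at this
  linarith [this]


/-- an automorphism has an inverse automorphism -/
lemma exists_inverse (hS : IsNumSgp S) (hf : IsPowerAut S f) :
    ∃ F : Finset ℕ → Finset ℕ, IsPowerAut S F ∧
      (∀ X ∈ PS S, F (f X) = X) ∧ (∀ Y ∈ PS S, f (F Y) = Y) := by
  classical
  obtain ⟨hmap, hinj, hsurj, hadd⟩ := hf
  set F : Finset ℕ → Finset ℕ :=
    fun Y => if h : Y ∈ PS S then (hsurj Y h).choose else Y with hF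
  have hFmem : ∀ Y ∈ PS S, F Y ∈ PS S ∧ f (F Y) = Y := by
    intro Y hY
    rw [hF]
    simp only [dif_pos hY]
    exact ⟨(hsurj Y hY).choose_spec.1, (hsurj Y hY).choose_spec.2⟩
  have hFf : ∀ X ∈ PS S, F (f X) = X := by
    intro X hX
    obtain ⟨h1, h2⟩ := hFmem (f X) (hmap _ hX)
    exact hinj _ h1 _ hX h2
  refine ⟨F, ⟨fun Y hY => (hFmem Y hY).1, ?_, ?_, ?_⟩, hFf, fun Y hY => (hFmem Y hY).2⟩
  · intro Y hY Z hZ heq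
    rw [← (hFmem Y hY).2, ← (hFmem Z hZ).2, heq]
  · intro X hX
    exact ⟨f X, hmap _ hX, hFf X hX⟩
  · intro Y hY Z hZ
    have hYZ : Y + Z ∈ PS S := PS_add hS hY hZ
    apply hinj _ (hFmem _ hYZ).1 _ (PS_add hS (hFmem Y hY).1 (hFmem Z hZ).1)
    rw [(hFmem _ hYZ).2, hadd _ (hFmem Y hY).1 _ (hFmem Z hZ).1,
      (hFmem Y hY).2, (hFmem Z hZ).2]

/-- the central result: an automorphism preserves minima -/
lemma mn_preserved (hS : IsNumSgp S) (hk : IsCritical S k) (hf : IsPowerAut S f) :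
    ∀ X ∈ PS S, mn (f X) = mn X := by
  have hfix : ∀ x ∈ S, f {x} = {x} := g_id hS hk hf
  obtain ⟨F, hFaut, hFf, hfF⟩ := exists_inverse hS hf
  have hFfix : ∀ x ∈ S, F {x} = {x} := by
    intro x hx
    have := hFf _ (singleton_mem_PS hx)
    rwa [hfix x hx] at this
  obtain ⟨c, hc0, hform⟩ := min_formula hS hk hf hfix
  obtain ⟨c', hc'0, hform'⟩ := min_formula hS hk hFaut hFfix
  have hP : ({k, k + 1} : Finset ℕ) ∈ PS S := pair_mem_PS hk (le_refl k) (by omega)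
  have hfP : f {k, k + 1} ∈ PS S := hf.1 _ hP
  have h1 := hform _ hP
  rw [mn_pair (by omega), mx_pair (by omega)] at h1
  have h2 := hform' _ hfP
  rw [hFf _ hP, mn_pair (by omega)] at h2
  have hD : (0 : ℤ) ≤ (mx (f {k, k + 1}) : ℤ) - (mn (f {k, k + 1}) : ℤ) := by
    have := mn_le_mx hfP.1
    omega
  have hc : c = 0 := by
    have hmul : 0 ≤ c' * ((mx (f {k, k + 1}) : ℤ) - (mn (f {k, k + 1}) : ℤ)) :=
      mul_nonneg hc'0 hD
    push_cast at h1
    nlinarith [h1, h2, hmul, hc0]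
  intro X hX
  have := hform X hX
  rw [hc] at this
  omega

end
end Stmt7Aux


/-- An automorphism of `P(S)` maps `P(S_θ)` into itself and restricts to an
automorphism of `P(S_θ)`, where `S_θ = [k, ∞)` for `k` the critical element. -/
theorem stmt7 (S : Set ℕ) (hS : IsNumSgp S) (k : ℕ) (hk : IsCritical S k)
    (f : Finset ℕ → Finset ℕ) (hf : IsPowerAut S f) :
    (∀ X ∈ PS {n : ℕ | k ≤ n}, f X ∈ PS {n : ℕ | k ≤ n}) ∧
    IsPowerAut {n : ℕ | k ≤ n} f := by
  have hmn := Stmt7Aux.mn_preserved hS hk hf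
  have hsub : PS {n : ℕ | k ≤ n} ⊆ PS S := by
    intro X hX
    exact ⟨hX.1, fun x hx => hk.1 x (hX.2 hx)⟩
  have hmain : ∀ X ∈ PS {n : ℕ | k ≤ n}, f X ∈ PS {n : ℕ | k ≤ n} := by
    intro X hX
    have hXS := hsub hX
    have hfX := hf.1 _ hXS
    refine ⟨hfX.1, fun y hy => ?_⟩
    have hy' : y ∈ f X := by exact_mod_cast hy
    have h1 : Stmt7Aux.mn (f X) ≤ y := Stmt7Aux.mn_le hy'
    have h2 : k ≤ Stmt7Aux.mn X := hX.2 (by exact_mod_cast Stmt7Aux.mn_mem hX.1)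
    have h3 := hmn X hXS
    show k ≤ y
    omega
  refine ⟨hmain, hmain, ?_, ?_, ?_⟩
  · intro X hX Y hY heq
    exact hf.2.1 _ (hsub hX) _ (hsub hY) heq
  · intro Y hY
    obtain ⟨X, hXS, rfl⟩ := hf.2.2.1 Y (hsub hY)
    refine ⟨X, ⟨hXS.1, fun x hx => ?_⟩, rfl⟩
    have hx' : x ∈ X := by exact_mod_cast hx
    have h1 : Stmt7Aux.mn X ≤ x := Stmt7Aux.mn_le hx'
    have h3 := hmn X hXS
    have h2 : k ≤ Stmt7Aux.mn (f X) :=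
      hY.2 (by exact_mod_cast Stmt7Aux.mn_mem (hf.1 _ hXS).1)
    show k ≤ x
    omega
  · intro X hX Y hY
    exact hf.2.2.2 _ (hsub hX) _ (hsub hY)
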